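/- Let H be a vector subspace of ℝⁿ such that H + ℤⁿ is dense in ℝⁿ. If A is an n×n matrix with rational coefficients preserving a direct sum decomposition ℝⁿ = H ⊕ V and whose restriction to H is the identity, then A is the identity matrix. -/

import Mathlib

open Pointwise

/-- Let `H` be a subspace of `ℝⁿ` such that `H + ℤⁿ` is dense in `ℝⁿ`.
If `A` is an `n × n` matrix with rational coefficients preserving a direct sum
decomposition `ℝⁿ = H ⊕ V` and whose restriction to `H` is the identity, then
`A` is the identity matrix. -/
theorem stmt0 (n : ℕ) (H V : Submodule ℝ (Fin n → ℝ))
    (hcompl : IsCompl H V)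
    (hdense : Dense ((H : Set (Fin n → ℝ)) +
      Set.range (fun z : Fin n → ℤ => fun i => (z i : ℝ))))
    (A : Matrix (Fin n) (Fin n) ℝ)
    (hrat : ∀ i j, ∃ q : ℚ, A i j = (q : ℝ))
    (hAH : ∀ x ∈ H, A.mulVec x ∈ H)
    (hAV : ∀ x ∈ V, A.mulVec x ∈ V)
    (hid : ∀ x ∈ H, A.mulVec x = x) :
    A = 1 := by
  suffices key : ∀ x, A.mulVec x = x by
    ext i j
    have := congrFun (key (Pi.single j 1)) i
    simpa [Matrix.mulVec_single, Matrix.one_apply, Pi.single_apply] using this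
  suffices key : ∀ i x, A.mulVec x i - x i = 0 by
    intro x
    funext i
    have := key i x
    linarith
  intro i
  -- the linear functional x ↦ (A x - x) i
  set L : (Fin n → ℝ) →ₗ[ℝ] ℝ :=
    (LinearMap.proj i) ∘ₗ (Matrix.mulVecLin A - LinearMap.id) with hL
  have hLapp : ∀ x, L x = A.mulVec x i - x i := by
    intro x; simp [hL, Matrix.mulVecLin_apply]
  suffices hz : ∀ x, L x = 0 by
    intro x; rw [← hLapp]; exact hz x
  have hLcont : Continuous L := L.continuous_of_finiteDimensional
  -- choose rational values
  choose q hq using hrat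
  -- row of rationals for A - 1
  set r : Fin n → ℚ := fun j => q i j - if i = j then 1 else 0 with hr
  set d : ℤ := ∏ j, ((r j).den : ℤ) with hd
  have hdpos : 0 < d := Finset.prod_pos (fun j _ => by exact_mod_cast (r j).pos)
  have hdne : (d : ℝ) ≠ 0 := by positivity
  -- the discrete target set
  set D : Set ℝ := Set.range (fun k : ℤ => (k : ℝ) / d) with hD
  -- L sends lattice points into D
  have hlat : ∀ z : Fin n → ℤ, L (fun j => (z j : ℝ)) ∈ D := by
    intro z
    have hden : ∀ j, ∃ m : ℤ, d = ((r j).den : ℤ) * m := by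
      intro j
      exact (Finset.dvd_prod_of_mem (fun j => ((r j).den : ℤ)) (Finset.mem_univ j))
    have hterm : ∀ j, ∃ k : ℤ, ((r j : ℝ)) * (z j : ℝ) = (k : ℝ) / d := by
      intro j
      obtain ⟨m, hm⟩ := hden j
      refine ⟨(r j).num * m * z j, ?_⟩
      have hdenne : ((r j).den : ℝ) ≠ 0 := by exact_mod_cast (r j).den_nz
      have hcast : ((r j : ℝ)) = ((r j).num : ℝ) / ((r j).den : ℝ) := by rw [Rat.cast_def]
      rw [hcast]
      have : (d : ℝ) = ((r j).den : ℝ) * (m : ℝ) := by exact_mod_cast congrArg Int.cast hm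
      have hmne : (m : ℝ) ≠ 0 := by
        intro h0
        rw [show m = 0 by exact_mod_cast h0, mul_zero] at hm
        omega
      rw [this]
      push_cast
      field_simp
    have hLz : L (fun j => (z j : ℝ)) = ∑ j, (r j : ℝ) * (z j : ℝ) := by
      rw [hLapp]
      have h1 : A.mulVec (fun j => ((z j : ℝ))) i = ∑ j, (q i j : ℝ) * (z j : ℝ) := by
        simp [Matrix.mulVec, dotProduct, hq]
      have h2 : ((z i : ℝ)) = ∑ j, (if i = j then (1:ℝ) else 0) * (z j : ℝ) := by
        simp [ite_mul]
      show A.mulVec (fun j => ((z j : ℝ))) i - (z i : ℝ) = _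
      rw [h1, h2, ← Finset.sum_sub_distrib]
      refine Finset.sum_congr rfl fun j _ => ?_
      simp only [hr]
      split_ifs <;> push_cast <;> ring
    choose k hk using hterm
    refine ⟨∑ j, k j, ?_⟩
    rw [hLz]
    show ((∑ j, k j : ℤ) : ℝ) / (d : ℝ) = _
    push_cast
    rw [Finset.sum_div]
    exact Finset.sum_congr rfl (fun j _ => (hk j).symm)
  -- D is closed
  have hDclosed : IsClosed D := by
    have h1 : IsClosed (Set.range ((↑) : ℤ → ℝ)) :=
      Int.isClosedEmbedding_coe_real.isClosed_range
    have h2 : D = (Homeomorph.mulRight₀ ((d : ℝ)⁻¹) (inv_ne_zero hdne)) ''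
        (Set.range ((↑) : ℤ → ℝ)) := by
      ext x
      simp only [hD, Set.mem_image, Set.mem_range]
      constructor
      · rintro ⟨k, rfl⟩; exact ⟨(k : ℝ), ⟨k, rfl⟩, by simp [div_eq_mul_inv]⟩
      · rintro ⟨y, ⟨k, rfl⟩, rfl⟩; exact ⟨k, by simp [div_eq_mul_inv]⟩
    rw [h2]
    exact (Homeomorph.isClosed_image _).mpr h1
  -- range of L lands in D
  have hrange : ∀ x, L x ∈ D := by
    intro x
    have hsub : L '' ((H : Set (Fin n → ℝ)) +
        Set.range (fun z : Fin n → ℤ => fun i => (z i : ℝ))) ⊆ D := by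
      rintro - ⟨y, hy, rfl⟩
      obtain ⟨h, hh, zr, ⟨z, rfl⟩, rfl⟩ := hy
      have hLh : L h = 0 := by rw [hLapp, hid h hh, sub_self]
      rw [map_add, hLh, zero_add]
      exact hlat z
    have : x ∈ closure ((H : Set (Fin n → ℝ)) +
        Set.range (fun z : Fin n → ℤ => fun i => (z i : ℝ))) := hdense x
    have hx : L x ∈ closure (L '' ((H : Set (Fin n → ℝ)) +
        Set.range (fun z : Fin n → ℤ => fun i => (z i : ℝ)))) :=
      image_closure_subset_closure_image hLcont (Set.mem_image_of_mem _ this)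
    exact hDclosed.closure_subset (closure_mono hsub hx)
  -- conclude L = 0
  intro x
  by_contra hx
  have ht : L (((d : ℝ)⁻¹ * 2⁻¹ * (L x)⁻¹) • x) = 1 / (2 * d) := by
    rw [map_smul, smul_eq_mul]
    field_simp
  obtain ⟨k, hk⟩ := hrange (((d : ℝ)⁻¹ * 2⁻¹ * (L x)⁻¹) • x)
  rw [ht] at hk
  field_simp at hk
  have h2 : ((k:ℝ)) * 2 * d = 1 * d := by linear_combination (d:ℝ) * hk
  have h3 : (k:ℝ) * 2 = 1 := mul_right_cancel₀ hdne h2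
  have : (k * 2 : ℤ) = 1 := by exact_mod_cast h3
  omega
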